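/- Let A, B ∈ ℝ[t, t⁻¹] be palindromic Laurent polynomials that are coprime in ℝ[t, t⁻¹]. If for every z on the unit circle at least one of A(z), B(z) is strictly positive, then there exist palindromic P, Q ∈ ℝ[t, t⁻¹] with P·A + Q·B = 1 and such that P(z) > 0 and Q(z) > 0 for every z on the unit circle. -/

import Mathlib

open LaurentPolynomial

noncomputable def lEval (p : LaurentPolynomial ℝ) (z : ℂ) : ℂ :=
  Finsupp.sum (AddMonoidAlgebra.coeff p) fun n a => (a : ℂ) * z ^ n

noncomputable def lhom (z : ℂ) (hz : z ≠ 0) : LaurentPolynomial ℝ →ₐ[ℝ] ℂ :=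
  AddMonoidAlgebra.lift ℝ ℂ ℤ
    { toFun := fun n => z ^ (Multiplicative.toAdd n)
      map_one' := by simp
      map_mul' := fun m n => by simp [zpow_add₀ hz] }

lemma lEval_eq_lhom (p : LaurentPolynomial ℝ) {z : ℂ} (hz : z ≠ 0) :
    lEval p z = lhom z hz p := by
  rw [lhom, AddMonoidAlgebra.lift_apply, lEval]
  refine Finsupp.sum_congr fun n _ => ?_
  simp [Algebra.smul_def]

lemma lhom_T {z : ℂ} (hz : z ≠ 0) (n : ℤ) : lhom z hz (T n) = z ^ n := by
  rw [T, lhom, AddMonoidAlgebra.lift_single]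
  simp

lemma lEval_mul {z : ℂ} (hz : z ≠ 0) (p q : LaurentPolynomial ℝ) :
    lEval (p * q) z = lEval p z * lEval q z := by
  rw [lEval_eq_lhom _ hz, lEval_eq_lhom _ hz, lEval_eq_lhom _ hz, map_mul]

lemma lEval_add (z : ℂ) (p q : LaurentPolynomial ℝ) :
    lEval (p + q) z = lEval p z + lEval q z := by
  classical
  simp only [lEval, AddMonoidAlgebra.coeff_add]
  apply Finsupp.sum_add_index <;> intros <;> push_cast <;> ring

lemma lEval_sub {z : ℂ} (hz : z ≠ 0) (p q : LaurentPolynomial ℝ) :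
    lEval (p - q) z = lEval p z - lEval q z := by
  rw [lEval_eq_lhom _ hz, lEval_eq_lhom _ hz, lEval_eq_lhom _ hz, map_sub]

lemma lEval_one {z : ℂ} (hz : z ≠ 0) : lEval 1 z = 1 := by
  rw [lEval_eq_lhom _ hz, map_one]

lemma lEval_invert {z : ℂ} (hz : z ≠ 0) (p : LaurentPolynomial ℝ) :
    lEval (invert p) z = lEval p z⁻¹ := by
  have hzi : z⁻¹ ≠ 0 := inv_ne_zero hz
  rw [lEval_eq_lhom _ hz, lEval_eq_lhom _ hzi]
  have : (lhom z hz).comp invert.toAlgHom = lhom z⁻¹ hzi := by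
    apply AddMonoidAlgebra.algHom_ext
    intro n
    have h1 : (AddMonoidAlgebra.single n (1:ℝ) : LaurentPolynomial ℝ) = T n := by rw [T]
    simp only [AlgHom.coe_comp, Function.comp_apply, h1, AlgEquiv.toAlgHom_eq_coe,
      AlgHom.coe_coe, invert_T, lhom_T, zpow_neg]
    have h2 : lhom z hz (invert (T n)) = (z ^ n)⁻¹ := by rw [invert_T, lhom_T, zpow_neg]
    exact h2.trans (inv_zpow z n).symm
    exact Subsingleton.elim _ _
  calc lhom z hz (invert p) = ((lhom z hz).comp invert.toAlgHom) p := rfl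
    _ = lhom z⁻¹ hzi p := by rw [this]

lemma lEval_conj (p : LaurentPolynomial ℝ) (z : ℂ) :
    lEval p ((starRingEnd ℂ) z) = (starRingEnd ℂ) (lEval p z) := by
  rw [lEval, lEval, Finsupp.sum, Finsupp.sum, map_sum]
  refine Finset.sum_congr rfl fun n _ => ?_
  rw [map_mul, Complex.conj_ofReal, map_zpow₀]

def Palindromic (p : LaurentPolynomial ℝ) : Prop := invert p = p

lemma conj_eq_inv {z : ℂ} (hz : ‖z‖ = 1) : (starRingEnd ℂ) z = z⁻¹ := by
  have h0 : z ≠ 0 := by intro h; rw [h] at hz; simp at hz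
  have : z * (starRingEnd ℂ) z = 1 := by
    rw [Complex.mul_conj]
    norm_cast
    rw [Complex.normSq_eq_norm_sq, hz]; norm_num
  field_simp [← this]
  linear_combination this

lemma lEval_real {p : LaurentPolynomial ℝ} (hp : Palindromic p) {z : ℂ} (hz : ‖z‖ = 1) :
    (lEval p z).im = 0 := by
  have h0 : z ≠ 0 := by intro h; rw [h] at hz; simp at hz
  have : (starRingEnd ℂ) (lEval p z) = lEval p z := by
    rw [← lEval_conj, conj_eq_inv hz, ← lEval_invert h0, hp]
  exact Complex.conj_eq_iff_im.mp this

noncomputable def zc (x : ℝ) : ℂ := ⟨x, Real.sqrt (1 - x^2)⟩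

lemma zc_norm {x : ℝ} (hx : x ∈ Set.Icc (-1:ℝ) 1) : ‖zc x‖ = 1 := by
  have h1 : (0:ℝ) ≤ 1 - x^2 := by nlinarith [hx.1, hx.2]
  have : Complex.normSq (zc x) = 1 := by
    simp [Complex.normSq_apply, zc, Real.sq_sqrt h1]; ring_nf; nlinarith [Real.sq_sqrt h1]
  rw [Complex.norm_def, this, Real.sqrt_one]

lemma zc_ne {x : ℝ} (hx : x ∈ Set.Icc (-1:ℝ) 1) : zc x ≠ 0 := by
  intro h; have := zc_norm hx; rw [h] at this; simp at this

lemma circle_cases {z : ℂ} (hz : ‖z‖ = 1) :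
    z.re ∈ Set.Icc (-1:ℝ) 1 ∧ (z = zc z.re ∨ z = (starRingEnd ℂ) (zc z.re)) := by
  have hre : |z.re| ≤ 1 := by rw [← hz]; exact Complex.abs_re_le_norm z
  have hx := abs_le.mp hre
  have hsq : z.re ^ 2 + z.im ^ 2 = 1 := by
    have : Complex.normSq z = 1 := by
      rw [Complex.normSq_eq_norm_sq, hz]; norm_num
    rw [Complex.normSq_apply] at this; nlinarith
  have him : Real.sqrt (1 - z.re^2) = |z.im| := by
    rw [show 1 - z.re^2 = z.im^2 by linarith, Real.sqrt_sq_eq_abs]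
  refine ⟨⟨hx.1, hx.2⟩, ?_⟩
  rcases le_or_gt 0 z.im with h | h
  · left; apply Complex.ext <;> simp [zc, him, abs_of_nonneg h]
  · right; apply Complex.ext <;> simp [zc, him, abs_of_neg h]

lemma lEval_re_continuousOn (p : LaurentPolynomial ℝ) :
    ContinuousOn (fun x : ℝ => (lEval p (zc x)).re) (Set.Icc (-1:ℝ) 1) := by
  have hzc : Continuous zc := by
    have : zc = fun x : ℝ => (x : ℂ) + (Real.sqrt (1 - x^2) : ℝ) * Complex.I := by
      funext x; apply Complex.ext <;> simp [zc]
    rw [this]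
    continuity
  have : ContinuousOn (fun x : ℝ => lEval p (zc x)) (Set.Icc (-1:ℝ) 1) := by
    unfold lEval Finsupp.sum
    apply continuousOn_finset_sum
    intro n _
    apply ContinuousOn.mul continuousOn_const
    exact fun x hx => ((hzc.continuousAt).zpow₀ n (Or.inl (zc_ne hx))).continuousWithinAt
  exact Complex.continuous_re.comp_continuousOn this

lemma lhom_C {z : ℂ} (hz : z ≠ 0) (r : ℝ) : lhom z hz (C r) = r := by
  have : (C r : LaurentPolynomial ℝ) = AddMonoidAlgebra.single 0 r := rfl
  rw [this, lhom, AddMonoidAlgebra.lift_single]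
  simp

lemma bez_id1 (p q a b u : ℝ) (h : p*a + q*b = 1) (hD : 0 < a^2+b^2) :
    p + ((q*b - p*a + (p+q)*(a-b) + u)/(a^2+b^2)) * b = (a + u*b)/(a^2+b^2) := by
  field_simp
  linear_combination a * h

lemma bez_id2 (p q a b u : ℝ) (h : p*a + q*b = 1) (hD : 0 < a^2+b^2) :
    q - ((q*b - p*a + (p+q)*(a-b) + u)/(a^2+b^2)) * a = (b - u*a)/(a^2+b^2) := by
  field_simp
  linear_combination b * h

lemma key_ineq (δ a b : ℝ) (hδ : 0 < δ) (hmax : δ ≤ max a b) :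
    0 < a + (max 0 (min 1 ((2*δ - min a b)/δ)) / δ * (b - a)) * b := by
  set ρ := max 0 (min 1 ((2*δ - min a b)/δ)) with hρdef
  have hρ0 : 0 ≤ ρ := le_max_left _ _
  have hρ1 : ρ ≤ 1 := by
    apply max_le (by norm_num) (min_le_left _ _)
  rcases le_or_gt b a with hba | hab
  · -- b ≤ a, so a = max ≥ δ, min = b
    have ha : δ ≤ a := le_trans hmax (by rw [max_eq_left hba])
    have hm : min a b = b := min_eq_right hba
    rcases lt_or_ge b 0 with hb | hb
    · -- b < 0 : ρ = 1
      have hρ : ρ = 1 := by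
        rw [hρdef, hm]
        rw [min_eq_left, max_eq_right (by norm_num)]
        rw [le_div_iff₀ hδ]; nlinarith
      rw [hρ]
      have h1 : (b - a) * b ≥ 0 := by nlinarith
      have h2 : (0:ℝ) < 1 / δ := by positivity
      nlinarith
    · -- b ≥ 0 : key fact ρ * b ≤ δ
      have hρb : ρ * b ≤ δ := by
        rcases le_or_gt b δ with h1 | h1
        · nlinarith
        · rcases le_or_gt (2*δ) b with h2 | h2
          · have : ρ = 0 := by
              rw [hρdef, hm, max_eq_left]
              apply le_trans (min_le_right _ _)
              apply div_nonpos_of_nonpos_of_nonneg (by linarith) hδ.le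
            rw [this]; nlinarith
          · have : ρ ≤ (2*δ - b)/δ := by
              rw [hρdef, hm]
              apply max_le ?_ (min_le_right _ _)
              apply div_nonneg (by linarith) hδ.le
            have h3 : ρ * b ≤ (2*δ - b)/δ * b := by
              apply mul_le_mul_of_nonneg_right this hb
            calc ρ * b ≤ (2*δ - b)/δ * b := h3
              _ ≤ δ := by rw [div_mul_eq_mul_div, div_le_iff₀ hδ]; nlinarith
      rcases le_or_gt (δ/2) b with h1 | h1
      · -- a + stuff ≥ b ≥ δ/2
        have : ρ / δ * (b - a) * b = -((ρ*b)/δ * (a - b)) := by field_simp; ring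
        rw [this]
        have h2 : (ρ*b)/δ ≤ 1 := by rw [div_le_one hδ]; exact hρb
        have h3 : 0 ≤ (ρ*b)/δ := by positivity
        nlinarith
      · -- b < δ/2 : ρ = 1
        have hρ : ρ = 1 := by
          rw [hρdef, hm, min_eq_left, max_eq_right (by norm_num)]
          rw [le_div_iff₀ hδ]; nlinarith
        rw [hρ]
        have : 1 / δ * (b - a) * b = (b^2 - a*b)/δ := by field_simp
        rw [this]
        have hd : 0 < (a*δ + (b^2 - a*b)) / δ := by
          apply div_pos ?_ hδ
          nlinarith [mul_le_mul_of_nonneg_left h1.le (le_trans hδ.le ha)]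
        calc (0:ℝ) < (a*δ + (b^2 - a*b))/δ := hd
          _ = a + (b^2 - a*b)/δ := by field_simp
  · -- a < b : b = max ≥ δ
    have hbδ : δ ≤ b := le_trans hmax (by rw [max_eq_right hab.le])
    rcases lt_or_ge 0 a with ha | ha
    · have : 0 ≤ ρ / δ * (b - a) * b := by
        apply mul_nonneg (mul_nonneg (by positivity) (by linarith)) (by linarith)
      linarith
    · -- a ≤ 0 : ρ = 1
      have hρ : ρ = 1 := by
        rw [hρdef, min_eq_left hab.le, min_eq_left, max_eq_right (by norm_num)]
        rw [le_div_iff₀ hδ]; nlinarith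
      rw [hρ]
      have h2 : 1 / δ * (b - a) * b ≥ b - a := by
        rw [ge_iff_le, div_mul_eq_mul_div, div_mul_eq_mul_div, le_div_iff₀ hδ]
        nlinarith
      linarith

/-- For coprime palindromic `A`, `B` with at least one of `A(z)`, `B(z)` positive
at each point of the unit circle, there are palindromic `P`, `Q`, positive on the
unit circle, with `PA + QB = 1`. -/
theorem exists_positive_palindromic_bezout
    (A B : LaurentPolynomial ℝ) (hA : Palindromic A) (hB : Palindromic B)
    (hcop : IsCoprime A B)
    (hpos : ∀ z : ℂ, ‖z‖ = 1 → 0 < (lEval A z).re ∨ 0 < (lEval B z).re) :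
    ∃ P Q : LaurentPolynomial ℝ, Palindromic P ∧ Palindromic Q ∧
      P * A + Q * B = 1 ∧
      ∀ z : ℂ, ‖z‖ = 1 → 0 < (lEval P z).re ∧ 0 < (lEval Q z).re := by
  classical
  obtain ⟨P₀, Q₀, h₀⟩ := hcop
  have hex : ∃ P₁ Q₁ : LaurentPolynomial ℝ,
      Palindromic P₁ ∧ Palindromic Q₁ ∧ P₁ * A + Q₁ * B = 1 := by
    refine ⟨C (2⁻¹:ℝ) * (P₀ + invert P₀), C (2⁻¹:ℝ) * (Q₀ + invert Q₀), ?_, ?_, ?_⟩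
    · unfold Palindromic
      rw [map_mul, map_add, invert_C, involutive_invert P₀]; ring
    · unfold Palindromic
      rw [map_mul, map_add, invert_C, involutive_invert Q₀]; ring
    · have h2 : invert P₀ * A + invert Q₀ * B = 1 := by
        have h3 := congrArg invert h₀
        rw [map_add, map_mul, map_mul, hA, hB, map_one] at h3
        exact h3
      have hC2 : (1 + 1 : LaurentPolynomial ℝ) = C 2 := by
        rw [show (2:ℝ) = 1+1 by norm_num, map_add, map_one]
      calc C (2⁻¹:ℝ) * (P₀ + invert P₀) * A + C (2⁻¹:ℝ) * (Q₀ + invert Q₀) * B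
          = C (2⁻¹:ℝ) * ((P₀*A + Q₀*B) + (invert P₀ * A + invert Q₀ * B)) := by ring
        _ = C (2⁻¹:ℝ) * (1+1) := by rw [h₀, h2]
        _ = C (2⁻¹:ℝ) * C 2 := by rw [hC2]
        _ = C ((2⁻¹:ℝ) * 2) := by rw [← map_mul]
        _ = 1 := by norm_num
  obtain ⟨P₁, Q₁, hP₁pal, hQ₁pal, hBez⟩ := hex
  set I1 := Set.Icc (-1:ℝ) 1 with hI1def
  have hI1ne : I1.Nonempty := Set.nonempty_Icc.mpr (by norm_num)
  set av := fun x : ℝ => (lEval A (zc x)).re with havdef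
  set bv := fun x : ℝ => (lEval B (zc x)).re with hbvdef
  set pv := fun x : ℝ => (lEval P₁ (zc x)).re with hpvdef
  set qv := fun x : ℝ => (lEval Q₁ (zc x)).re with hqvdef
  have havc : ContinuousOn av I1 := lEval_re_continuousOn A
  have hbvc : ContinuousOn bv I1 := lEval_re_continuousOn B
  have hpvc : ContinuousOn pv I1 := lEval_re_continuousOn P₁
  have hqvc : ContinuousOn qv I1 := lEval_re_continuousOn Q₁
  -- pointwise Bezout
  have hbez_pt : ∀ x ∈ I1, pv x * av x + qv x * bv x = 1 := by
    intro x hx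
    have hzne := zc_ne hx
    have h1 := congrArg (fun p => lEval p (zc x)) hBez
    simp only [lEval_add, lEval_mul hzne, lEval_one hzne] at h1
    have h2 := congrArg Complex.re h1
    simp only [Complex.add_re, Complex.mul_re, Complex.one_re,
      lEval_real hA (zc_norm hx), lEval_real hB (zc_norm hx),
      lEval_real hP₁pal (zc_norm hx), lEval_real hQ₁pal (zc_norm hx),
      mul_zero, zero_mul, sub_zero] at h2
    exact h2
  -- uniform positivity δ
  obtain ⟨x₀, hx₀, hminδ⟩ := isCompact_Icc.exists_isMinOn hI1ne (havc.sup hbvc)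
  set δ := max (av x₀) (bv x₀) with hδdef
  have hδpos : 0 < δ := by
    rcases hpos (zc x₀) (zc_norm hx₀) with h | h
    · exact lt_max_of_lt_left h
    · exact lt_max_of_lt_right h
  have hδle : ∀ x ∈ I1, δ ≤ max (av x) (bv x) := fun x hx => isMinOn_iff.mp hminδ x hx
  have hD : ∀ x ∈ I1, 0 < av x ^ 2 + bv x ^ 2 := by
    intro x hx
    have h := hδle x hx
    rcases le_max_iff.mp h with h | h <;> nlinarith
  set u := fun x : ℝ => max 0 (min 1 ((2*δ - min (av x) (bv x))/δ)) / δ * (bv x - av x)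
    with hudef
  set f := fun x : ℝ =>
    (qv x * bv x - pv x * av x + (pv x + qv x)*(av x - bv x) + u x)/(av x^2 + bv x^2)
    with hfdef
  have hg1 : ∀ x ∈ I1, 0 < pv x + f x * bv x := by
    intro x hx
    rw [hfdef, bez_id1 _ _ _ _ _ (hbez_pt x hx) (hD x hx)]
    exact div_pos (key_ineq δ (av x) (bv x) hδpos (hδle x hx)) (hD x hx)
  have hg2 : ∀ x ∈ I1, 0 < qv x - f x * av x := by
    intro x hx
    rw [hfdef, bez_id2 _ _ _ _ _ (hbez_pt x hx) (hD x hx)]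
    apply div_pos ?_ (hD x hx)
    have h := key_ineq δ (bv x) (av x) hδpos (le_trans (hδle x hx) (le_of_eq (max_comm _ _)))
    rw [min_comm (bv x) (av x)] at h
    simp only [hudef]
    nlinarith [h]
  have huc : ContinuousOn u I1 := by
    apply ContinuousOn.mul
    · apply ContinuousOn.div_const
      apply ContinuousOn.sup continuousOn_const
      apply ContinuousOn.inf continuousOn_const
      apply ContinuousOn.div_const
      exact continuousOn_const.sub (havc.inf hbvc)
    · exact hbvc.sub havc
  have hfc : ContinuousOn f I1 := by
    apply ContinuousOn.div
    · exact ((((hqvc.mul hbvc).sub (hpvc.mul havc)).add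
        ((hpvc.add hqvc).mul (havc.sub hbvc))).add huc)
    · exact (havc.pow 2).add (hbvc.pow 2)
    · exact fun x hx => (hD x hx).ne'
  -- uniform margin ε
  obtain ⟨x₁, hx₁, hminε⟩ := isCompact_Icc.exists_isMinOn hI1ne
    (((hpvc.add (hfc.mul hbvc))).inf ((hqvc.sub (hfc.mul havc))))
  set ε := min (pv x₁ + f x₁ * bv x₁) (qv x₁ - f x₁ * av x₁) with hεdef
  have hεpos : 0 < ε := lt_min (hg1 x₁ hx₁) (hg2 x₁ hx₁)
  have hεle : ∀ x ∈ I1, ε ≤ min (pv x + f x * bv x) (qv x - f x * av x) :=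
    fun x hx => isMinOn_iff.mp hminε x hx
  -- bound M
  obtain ⟨Ca, hCa⟩ := isCompact_Icc.exists_bound_of_continuousOn havc
  obtain ⟨Cb, hCb⟩ := isCompact_Icc.exists_bound_of_continuousOn hbvc
  set M := max (max Ca Cb) 1 with hMdef
  have hM1 : (1:ℝ) ≤ M := le_max_right _ _
  have hMpos : 0 < M := lt_of_lt_of_le one_pos hM1
  have haM : ∀ x ∈ I1, |av x| ≤ M := fun x hx =>
    le_trans (hCa x hx) (le_trans (le_max_left _ _) (le_max_left _ _))
  have hbM : ∀ x ∈ I1, |bv x| ≤ M := fun x hx =>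
    le_trans (hCb x hx) (le_trans (le_max_right _ _) (le_max_left _ _))
  -- Weierstrass approximation
  obtain ⟨r, hr⟩ := exists_polynomial_near_of_continuousOn (-1) 1 f hfc (ε/(2*M))
    (by positivity)
  -- build R
  set w := C (2⁻¹:ℝ) * (T 1 + T (-1)) with hwdef
  have hwpal : invert w = w := by
    rw [hwdef, map_mul, map_add, invert_C, invert_T, invert_T]; ring_nf
  set R := Polynomial.aeval w r with hRdef
  have hRpal : Palindromic R := by
    unfold Palindromic
    rw [hRdef, ← Polynomial.aeval_algHom_apply invert w r, hwpal]
  have hReval : ∀ x ∈ I1, lEval R (zc x) = ((r.eval x : ℝ) : ℂ) := by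
    intro x hx
    have hzne := zc_ne hx
    have hzn := zc_norm hx
    have h1 : lhom (zc x) hzne w = ((x:ℝ):ℂ) := by
      rw [hwdef, map_mul, map_add, lhom_T, lhom_T, lhom_C]
      have hconj : (zc x)⁻¹ = (starRingEnd ℂ) (zc x) := (conj_eq_inv hzn).symm
      rw [zpow_one, show ((-1:ℤ)) = -1 from rfl, zpow_neg, zpow_one, hconj]
      rw [Complex.add_conj]
      have : (zc x).re = x := rfl
      rw [this]
      push_cast
      ring
    rw [lEval_eq_lhom _ hzne, hRdef, ← Polynomial.aeval_algHom_apply (lhom (zc x) hzne) w r,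
      h1]
    rw [show ((x:ℝ):ℂ) = algebraMap ℝ ℂ x from rfl,
      Polynomial.aeval_algebraMap_apply_eq_algebraMap_eval]
    simp
  refine ⟨P₁ + R * B, Q₁ - R * A, ?_, ?_, ?_, ?_⟩
  · unfold Palindromic
    rw [map_add, map_mul, hRpal, hB, hP₁pal]
  · unfold Palindromic
    rw [map_sub, map_mul, hRpal, hA, hQ₁pal]
  · linear_combination hBez
  · intro z hz
    obtain ⟨hxmem, hcase⟩ := circle_cases hz
    set x := z.re with hxdef
    have hzne := zc_ne hxmem
    have htrans : ∀ p : LaurentPolynomial ℝ,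
        (lEval p z).re = (lEval p (zc x)).re := by
      intro p
      rcases hcase with h | h
      · rw [h]
      · rw [h, lEval_conj, Complex.conj_re]
    have hrx := hr x hxmem
    have hεx := hεle x hxmem
    have hbMx := hbM x hxmem
    have haMx := haM x hxmem
    constructor
    · rw [htrans, lEval_add, lEval_mul hzne, hReval x hxmem, Complex.add_re,
        Complex.re_ofReal_mul]
      have h1 : ε ≤ pv x + f x * bv x := le_trans hεx (min_le_left _ _)
      have h2 : |(Polynomial.eval x r - f x) * bv x| ≤ ε/(2*M) * M := by
        rw [abs_mul]
        apply mul_le_mul (le_of_lt hrx) hbMx (abs_nonneg _) (by positivity)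
      have h3 := neg_abs_le ((Polynomial.eval x r - f x) * bv x)
      have h4 : ε/(2*M)*M = ε/2 := by field_simp
      have h5 : (lEval P₁ (zc x)).re = pv x := rfl
      have h6 : (lEval B (zc x)).re = bv x := rfl
      rw [h5, h6]
      nlinarith
    · rw [htrans, lEval_sub hzne, lEval_mul hzne, hReval x hxmem, Complex.sub_re,
        Complex.re_ofReal_mul]
      have h1 : ε ≤ qv x - f x * av x := le_trans hεx (min_le_right _ _)
      have h2 : |(Polynomial.eval x r - f x) * av x| ≤ ε/(2*M) * M := by
        rw [abs_mul]
        apply mul_le_mul (le_of_lt hrx) haMx (abs_nonneg _) (by positivity)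
      have h3 := le_abs_self ((Polynomial.eval x r - f x) * av x)
      have h7 : Polynomial.eval x r * av x
          = f x * av x + (Polynomial.eval x r - f x) * av x := by ring
      have h4 : ε/(2*M)*M = ε/2 := by field_simp
      have h5 : (lEval Q₁ (zc x)).re = qv x := rfl
      have h6 : (lEval A (zc x)).re = av x := rfl
      rw [h5, h6, h7]
      linarith
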